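/- Let $K$ be a nonnegative integer and let $m$ be a nonnegative integer with $m<(K-1)/2$. There is a constant $C=C(K)$ such that for every compactly supported $g\in C^K(\mathbb{R})$ and every $\Lambda\ge 1$, the $m$-th derivative of the function $\Lambda\mapsto \int_{\mathbb{R}} g(y)e^{i\Lambda y^2}\,dy$ satisfies $\big|\big(\tfrac{d}{d\Lambda}\big)^m \int_{\mathbb{R}} g(y)\,e^{i\Lambda y^2}\,dy\big| \le C\,\Lambda^{-m-\frac12}\,\sum_{j=0}^{K} \Lambda^{-j/2}\,\sup_{\mathbb{R}}|g^{(j)}|$. -/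

import Mathlib

open MeasureTheory Real

noncomputable section
namespace OscAux

/-- The oscillatory kernel. -/
def E (Λ y : ℝ) : ℂ := Complex.exp (Complex.I * Λ * (y:ℂ)^2)

lemma norm_E (Λ y : ℝ) : ‖E Λ y‖ = 1 := by
  rw [E, show Complex.I * Λ * (y:ℂ)^2 = ((Λ*y^2 : ℝ):ℂ) * Complex.I by push_cast; ring]
  exact Complex.norm_exp_ofReal_mul_I (Λ*y^2)

lemma continuous_E (Λ : ℝ) : Continuous (E Λ) := by
  unfold E; fun_prop

lemma hasDerivAt_E (Λ x : ℝ) :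
    HasDerivAt (E Λ) (2 * Complex.I * Λ * x * E Λ x) x := by
  have h1 : HasDerivAt (fun y : ℝ => Complex.I * Λ * (y:ℂ)^2)
      (Complex.I * Λ * (2 * (x:ℂ))) x := by
    have := ((hasDerivAt_pow 2 ((x:ℝ):ℂ)).const_mul (Complex.I * (Λ:ℂ))).comp_ofReal
    simpa using this
  have := h1.cexp
  convert this using 1
  all_goals (unfold E; ring)

lemma hasDerivAt_zpow_ofReal (r : ℤ) (x : ℝ) (hx : x ≠ 0) :
    HasDerivAt (fun y : ℝ => (y:ℂ)^r) ((r:ℂ) * (x:ℂ)^(r-1)) x := by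
  exact (hasDerivAt_zpow r ((x:ℝ):ℂ) (Or.inl (by exact_mod_cast hx))).comp_ofReal

lemma hasCompactSupport_iteratedDeriv {g : ℝ → ℂ} (hsupp : HasCompactSupport g) (j : ℕ) :
    HasCompactSupport (iteratedDeriv j g) := by
  induction j generalizing g with
  | zero => simpa using hsupp
  | succ n ih => rw [iteratedDeriv_succ']; exact ih hsupp.deriv

lemma bddAbove_norm_iteratedDeriv {g : ℝ → ℂ} {s : ℕ} (hg : ContDiff ℝ (s:ℕ) g)
    (hsupp : HasCompactSupport g) {j : ℕ} (hj : j ≤ s) :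
    BddAbove (Set.range fun y => ‖iteratedDeriv j g y‖) := by
  obtain ⟨C, hC⟩ := (hg.continuous_iteratedDeriv j (by exact_mod_cast hj)).bounded_above_of_compact_support
    (hasCompactSupport_iteratedDeriv hsupp j)
  exact ⟨C, by rintro _ ⟨y, rfl⟩; exact hC y⟩

lemma norm_le_sup {g : ℝ → ℂ} {s : ℕ} (hg : ContDiff ℝ (s:ℕ) g)
    (hsupp : HasCompactSupport g) {j : ℕ} (hj : j ≤ s) (y : ℝ) :
    ‖iteratedDeriv j g y‖ ≤ ⨆ y : ℝ, ‖iteratedDeriv j g y‖ :=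
  le_ciSup (bddAbove_norm_iteratedDeriv hg hsupp hj) y

lemma sup_nonneg' {g : ℝ → ℂ} {s : ℕ} (hg : ContDiff ℝ (s:ℕ) g)
    (hsupp : HasCompactSupport g) {j : ℕ} (hj : j ≤ s) :
    0 ≤ ⨆ y : ℝ, ‖iteratedDeriv j g y‖ :=
  le_trans (norm_nonneg _) (norm_le_sup hg hsupp hj 0)


lemma hasDerivAt_ofReal (x : ℝ) : HasDerivAt (fun y : ℝ => (y:ℂ)) 1 x := by
  exact Complex.ofRealCLM.hasDerivAt (x := x)

lemma a_zpow {Λ : ℝ} (hΛ : 0 < Λ) (k : ℤ) :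
    (Λ ^ (-(1:ℝ)/2)) ^ k = Λ ^ (-(k:ℝ)/2) := by
  rw [← Real.rpow_intCast (Λ ^ (-(1:ℝ)/2)) k, ← Real.rpow_mul hΛ.le]
  congr 1; ring

lemma continuousOn_zpow_ofReal (r : ℤ) :
    ContinuousOn (fun y : ℝ => (y:ℂ)^r) {(0:ℝ)}ᶜ := fun x hx =>
  (ContinuousAt.comp (continuousAt_zpow₀ _ _ (Or.inl (by exact_mod_cast hx)))
    Complex.continuous_ofReal.continuousAt).continuousWithinAt

lemma auxA (r : ℤ) (s : ℕ) (hr : r ≤ -2) :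
    ∀ g : ℝ → ℂ, ContDiff ℝ (s:ℕ) g → HasCompactSupport g →
      ∀ Λ : ℝ, 1 ≤ Λ → ∀ R : ℝ, Λ ^ (-(1:ℝ)/2) ≤ R →
      ‖∫ y in (Λ ^ (-(1:ℝ)/2))..R, g y * (y:ℂ) ^ r * E Λ y‖
        ≤ 1 * Λ ^ (-((r:ℝ) + 1)/2) *
            ∑ j ∈ Finset.range (s+1), Λ ^ (-(j:ℝ)/2) * (⨆ y : ℝ, ‖iteratedDeriv j g y‖) := by
  intro g hg hsupp Λ hΛ R haR
  have hΛ0 : (0:ℝ) < Λ := lt_of_lt_of_le one_pos hΛ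
  set a := Λ ^ (-(1:ℝ)/2) with ha_def
  have ha0 : 0 < a := Real.rpow_pos_of_pos hΛ0 _
  have hR0 : 0 < R := lt_of_lt_of_le ha0 haR
  have hnot : (0:ℝ) ∉ Set.uIcc a R := by
    rw [Set.uIcc_of_le haR]; rintro ⟨h0, -⟩; exact absurd h0 (not_le.mpr ha0)
  set M0 := ⨆ y : ℝ, ‖iteratedDeriv 0 g y‖ with hM0_def
  have hM0' : ∀ y, ‖g y‖ ≤ M0 := fun y => by
    simpa [hM0_def] using norm_le_sup hg hsupp (Nat.zero_le s) y
  have hM0nn : 0 ≤ M0 := le_trans (norm_nonneg _) (hM0' 0)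
  have hcont : ContinuousOn (fun y : ℝ => g y * (y:ℂ) ^ r * E Λ y) (Set.uIcc a R) :=
    (((hg.continuous.continuousOn).mul ((continuousOn_zpow_ofReal r).mono
      (fun x hx h0 => hnot (h0 ▸ hx)))).mul (continuous_E Λ).continuousOn)
  have hcont2 : ContinuousOn (fun y : ℝ => M0 * y ^ r) (Set.uIcc a R) := by
    apply ContinuousOn.mul continuousOn_const
    intro x hx
    exact (continuousAt_zpow₀ x r (Or.inl (fun h0 => hnot (h0 ▸ hx)))).continuousWithinAt
  have hpt : ∀ y ∈ Set.Icc a R, ‖g y * (y:ℂ) ^ r * E Λ y‖ ≤ M0 * y ^ r := by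
    intro y hy
    have hy0 : 0 < y := lt_of_lt_of_le ha0 hy.1
    rw [norm_mul, norm_mul, norm_E, norm_zpow, Complex.norm_real, Real.norm_eq_abs,
      abs_of_pos hy0, mul_one]
    exact mul_le_mul_of_nonneg_right (hM0' y) (zpow_nonneg hy0.le _)
  have key : (∫ y in a..R, (y:ℝ) ^ r) ≤ a ^ (r+1) := by
    rw [integral_zpow (Or.inr ⟨by omega, hnot⟩)]
    have hRp : (0:ℝ) ≤ R ^ (r+1) := zpow_nonneg hR0.le _
    have hap : (0:ℝ) ≤ a ^ (r+1) := zpow_nonneg ha0.le _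
    have hc : ((r:ℝ) + 1) ≤ -1 := by
      have : (r:ℝ) ≤ -2 := by exact_mod_cast hr
      linarith
    rw [div_le_iff_of_neg (by linarith : ((r:ℝ)+1) < 0)]
    nlinarith
  calc ‖∫ y in a..R, g y * (y:ℂ) ^ r * E Λ y‖
      ≤ ∫ y in a..R, ‖g y * (y:ℂ) ^ r * E Λ y‖ :=
        intervalIntegral.norm_integral_le_integral_norm haR
    _ ≤ ∫ y in a..R, M0 * y ^ r := by
        apply intervalIntegral.integral_mono_on haR
          (hcont.norm.intervalIntegrable) (hcont2.intervalIntegrable) hpt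
    _ = M0 * ∫ y in a..R, (y:ℝ) ^ r := by rw [intervalIntegral.integral_const_mul]
    _ ≤ M0 * a ^ (r+1) := mul_le_mul_of_nonneg_left key hM0nn
    _ = a ^ (r+1) * M0 := mul_comm _ _
    _ ≤ a ^ (r+1) * ∑ j ∈ Finset.range (s+1), Λ ^ (-(j:ℝ)/2) * (⨆ y : ℝ, ‖iteratedDeriv j g y‖) := by
        apply mul_le_mul_of_nonneg_left _ (zpow_nonneg ha0.le _)
        have h0 : M0 = Λ ^ (-((0:ℕ):ℝ)/2) * ⨆ y : ℝ, ‖iteratedDeriv 0 g y‖ := by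
          rw [show -((0:ℕ):ℝ)/2 = 0 by norm_num, Real.rpow_zero, one_mul]
        rw [h0]
        apply Finset.single_le_sum (f := fun j : ℕ => Λ ^ (-(j:ℝ)/2) * ⨆ y : ℝ, ‖iteratedDeriv j g y‖)
          (fun j hj => mul_nonneg (Real.rpow_nonneg hΛ0.le _)
            (sup_nonneg' hg hsupp (Nat.lt_succ_iff.mp (Finset.mem_range.mp hj))))
          (Finset.mem_range.mpr (Nat.succ_pos s))
    _ = 1 * Λ ^ (-((r:ℝ) + 1)/2) * ∑ j ∈ Finset.range (s+1), Λ ^ (-(j:ℝ)/2) * (⨆ y : ℝ, ‖iteratedDeriv j g y‖) := by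
        rw [ha_def, a_zpow hΛ0 (r+1), one_mul]
        congr 2
        push_cast; ring


lemma auxB (r : ℤ) (t : ℕ) (hr : -1 ≤ r) (hrs : r + 2 ≤ (t:ℤ) + 1)
    (C₁ C₂ : ℝ) (hC₁ : 0 ≤ C₁) (hC₂ : 0 ≤ C₂)
    (h₁ : ∀ g : ℝ → ℂ, ContDiff ℝ (t:ℕ) g → HasCompactSupport g →
      ∀ Λ : ℝ, 1 ≤ Λ → ∀ R : ℝ, (∀ y, R ≤ y → y ∉ tsupport g) → Λ ^ (-(1:ℝ)/2) ≤ R →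
      ‖∫ y in (Λ ^ (-(1:ℝ)/2))..R, g y * (y:ℂ) ^ (r-1) * E Λ y‖
        ≤ C₁ * Λ ^ (-(((r-1:ℤ):ℝ) + 1)/2) *
            ∑ j ∈ Finset.range (t+1), Λ ^ (-(j:ℝ)/2) * (⨆ y : ℝ, ‖iteratedDeriv j g y‖))
    (h₂ : ∀ g : ℝ → ℂ, ContDiff ℝ ((t+1:ℕ):ℕ) g → HasCompactSupport g →
      ∀ Λ : ℝ, 1 ≤ Λ → ∀ R : ℝ, (∀ y, R ≤ y → y ∉ tsupport g) → Λ ^ (-(1:ℝ)/2) ≤ R →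
      ‖∫ y in (Λ ^ (-(1:ℝ)/2))..R, g y * (y:ℂ) ^ (r-2) * E Λ y‖
        ≤ C₂ * Λ ^ (-(((r-2:ℤ):ℝ) + 1)/2) *
            ∑ j ∈ Finset.range (t+2), Λ ^ (-(j:ℝ)/2) * (⨆ y : ℝ, ‖iteratedDeriv j g y‖)) :
    ∀ g : ℝ → ℂ, ContDiff ℝ ((t+1:ℕ):ℕ) g → HasCompactSupport g →
      ∀ Λ : ℝ, 1 ≤ Λ → ∀ R : ℝ, (∀ y, R ≤ y → y ∉ tsupport g) → Λ ^ (-(1:ℝ)/2) ≤ R →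
      ‖∫ y in (Λ ^ (-(1:ℝ)/2))..R, g y * (y:ℂ) ^ r * E Λ y‖
        ≤ (1/2 + C₁/2 + |(r:ℝ)-1| * C₂ / 2) * Λ ^ (-((r:ℝ) + 1)/2) *
            ∑ j ∈ Finset.range (t+2), Λ ^ (-(j:ℝ)/2) * (⨆ y : ℝ, ‖iteratedDeriv j g y‖) := by
  intro g hg hsupp Λ hΛ R hR haR
  have hΛ0 : (0:ℝ) < Λ := lt_of_lt_of_le one_pos hΛ
  set a := Λ ^ (-(1:ℝ)/2) with ha_def
  have ha0 : 0 < a := Real.rpow_pos_of_pos hΛ0 _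
  have hR0 : 0 < R := lt_of_lt_of_le ha0 haR
  have hne0 : ∀ x ∈ Set.uIcc a R, x ≠ 0 := by
    rw [Set.uIcc_of_le haR]; exact fun x hx => (lt_of_lt_of_le ha0 hx.1).ne'
  -- smoothness facts
  have hg1 : ContDiff ℝ ((t : WithTop ℕ∞) + 1) g := by exact_mod_cast hg
  have hgderiv : ContDiff ℝ (t:ℕ) (deriv g) := by
    have := (contDiff_succ_iff_deriv.mp hg1).2.2
    exact_mod_cast this
  have hsupp' : HasCompactSupport (deriv g) := hsupp.deriv
  have hR' : ∀ y, R ≤ y → y ∉ tsupport (deriv g) := fun y hy hmem =>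
    hR y hy (closure_minimal support_deriv_subset isClosed_closure hmem)
  have g0 : g R = 0 := image_eq_zero_of_notMem_tsupport (hR R le_rfl)
  have hdiffg : ∀ x : ℝ, HasDerivAt g (deriv g x) x := fun x =>
    ((hg.differentiable (by simp)).differentiableAt).hasDerivAt
  have hcontg' : Continuous (deriv g) := hgderiv.continuous
  -- the constant c
  set c : ℂ := 2 * Complex.I * (Λ:ℂ) with hc_def
  have hc0 : c ≠ 0 := by
    simp [hc_def, Complex.I_ne_zero, Complex.ext_iff]
    intro h; linarith
  have hnormc : ‖c⁻¹‖ = (2*Λ)⁻¹ := by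
    rw [norm_inv, hc_def]
    simp [Complex.norm_real, abs_of_pos hΛ0]
  -- derivatives
  have hu : ∀ x ∈ Set.uIcc a R, HasDerivAt (fun y : ℝ => g y * (y:ℂ)^(r-1) * c⁻¹)
      ((deriv g x * (x:ℂ)^(r-1) + g x * (((r-1:ℤ):ℂ) * (x:ℂ)^(r-1-1))) * c⁻¹) x := fun x hx =>
    ((hdiffg x).mul (hasDerivAt_zpow_ofReal (r-1) x (hne0 x hx))).mul_const _
  have hv : ∀ x ∈ Set.uIcc a R, HasDerivAt (E Λ) (2*Complex.I*Λ*x * E Λ x) x :=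
    fun x _ => hasDerivAt_E Λ x
  -- integrability
  have hczpow : ∀ (k : ℤ), ContinuousOn (fun y : ℝ => (y:ℂ)^k) (Set.uIcc a R) :=
    fun k => (continuousOn_zpow_ofReal k).mono (fun x hx => hne0 x hx)
  have hint1 : IntervalIntegrable (fun y : ℝ => deriv g y * (y:ℂ)^(r-1) * E Λ y) volume a R :=
    (((hcontg'.continuousOn).mul (hczpow (r-1))).mul
      (continuous_E Λ).continuousOn).intervalIntegrable
  have hint2 : IntervalIntegrable (fun y : ℝ => g y * (y:ℂ)^(r-2) * E Λ y) volume a R :=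
    (((hg.continuous.continuousOn).mul (hczpow (r-2))).mul
      (continuous_E Λ).continuousOn).intervalIntegrable
  have hu'int : IntervalIntegrable (fun x : ℝ =>
      (deriv g x * (x:ℂ)^(r-1) + g x * (((r-1:ℤ):ℂ) * (x:ℂ)^(r-1-1))) * c⁻¹) volume a R := by
    apply ContinuousOn.intervalIntegrable
    exact (((hcontg'.continuousOn).mul (hczpow (r-1))).add
      ((hg.continuous.continuousOn).mul ((continuousOn_const).mul (hczpow (r-1-1))))).mul
      continuousOn_const
  have hv'int : IntervalIntegrable (fun x : ℝ => 2*Complex.I*Λ*x * E Λ x) volume a R := by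
    apply Continuous.intervalIntegrable
    exact (continuous_const.mul Complex.continuous_ofReal).mul (continuous_E Λ)
  have IBP := intervalIntegral.integral_mul_deriv_eq_deriv_mul hu hv hu'int hv'int
  have e1 : (∫ y in a..R, g y * (y:ℂ)^r * E Λ y)
      = ∫ x in a..R, (g x * (x:ℂ)^(r-1) * c⁻¹) * (2*Complex.I*Λ*x * E Λ x) := by
    apply intervalIntegral.integral_congr
    intro x hx
    have hx0 : ((x:ℝ):ℂ) ≠ 0 := by exact_mod_cast hne0 x hx
    have hpow : ((x:ℂ))^(r-1) * (x:ℂ) = (x:ℂ)^r := by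
      rw [zpow_sub_one₀ hx0]; field_simp
    calc g x * (x:ℂ)^r * E Λ x = g x * ((x:ℂ)^(r-1) * (x:ℂ)) * E Λ x := by rw [hpow]
      _ = (g x * (x:ℂ)^(r-1) * c⁻¹) * (2*Complex.I*Λ*x * E Λ x) := by
          rw [hc_def]
          have hΛc : (Λ:ℂ) ≠ 0 := by exact_mod_cast hΛ0.ne'
          field_simp
  have key : (∫ y in a..R, g y * (y:ℂ)^r * E Λ y)
      = - ((g a * (a:ℂ)^(r-1) * c⁻¹) * E Λ a)
        - ∫ x in a..R, ((deriv g x * (x:ℂ)^(r-1) + g x * (((r-1:ℤ):ℂ) * (x:ℂ)^(r-1-1))) * c⁻¹)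
            * E Λ x := by
    rw [e1, IBP, g0]
    ring
  have hsub : (r : ℤ) - 1 - 1 = r - 2 := by ring
  have split : (∫ x in a..R, ((deriv g x * (x:ℂ)^(r-1)
        + g x * (((r-1:ℤ):ℂ) * (x:ℂ)^(r-1-1))) * c⁻¹) * E Λ x)
      = c⁻¹ * (∫ y in a..R, deriv g y * (y:ℂ)^(r-1) * E Λ y)
        + (((r-1:ℤ):ℂ) * c⁻¹) * (∫ y in a..R, g y * (y:ℂ)^(r-2) * E Λ y) := by
    rw [← intervalIntegral.integral_const_mul, ← intervalIntegral.integral_const_mul,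
      ← intervalIntegral.integral_add (hint1.const_mul _) (hint2.const_mul _)]
    apply intervalIntegral.integral_congr
    intro x hx
    rw [hsub]
    ring
  -- the sum S and its properties
  set S := ∑ j ∈ Finset.range (t+2), Λ ^ (-(j:ℝ)/2) * (⨆ y : ℝ, ‖iteratedDeriv j g y‖) with hS_def
  have hSnn : 0 ≤ S := Finset.sum_nonneg (fun j hj => mul_nonneg (Real.rpow_nonneg hΛ0.le _)
    (sup_nonneg' hg hsupp (Nat.lt_succ_iff.mp (Finset.mem_range.mp hj))))
  have hM0S : (⨆ y : ℝ, ‖iteratedDeriv 0 g y‖) ≤ S := by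
    have h0 : (⨆ y : ℝ, ‖iteratedDeriv 0 g y‖)
        = Λ ^ (-((0:ℕ):ℝ)/2) * ⨆ y : ℝ, ‖iteratedDeriv 0 g y‖ := by
      rw [show -((0:ℕ):ℝ)/2 = 0 by norm_num, Real.rpow_zero, one_mul]
    rw [h0, hS_def]
    exact Finset.single_le_sum
      (f := fun j : ℕ => Λ ^ (-(j:ℝ)/2) * ⨆ y : ℝ, ‖iteratedDeriv j g y‖)
      (fun j hj => mul_nonneg (Real.rpow_nonneg hΛ0.le _)
        (sup_nonneg' hg hsupp (Nat.lt_succ_iff.mp (Finset.mem_range.mp hj))))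
      (Finset.mem_range.mpr (Nat.succ_pos _))
  -- rpow merging helper
  have merge : ∀ x y z : ℝ, x + y = z → Λ ^ x * Λ ^ y = Λ ^ z := fun x y z h => by
    rw [← Real.rpow_add hΛ0, h]
  have hΛinv : Λ⁻¹ = Λ ^ (-1 : ℝ) := (Real.rpow_neg_one Λ).symm
  -- bound on the boundary term
  have hanorm : ‖(a:ℂ)^(r-1)‖ = Λ ^ (-((r:ℝ)-1)/2) := by
    rw [norm_zpow, Complex.norm_real, Real.norm_eq_abs, abs_of_pos ha0, ha_def, a_zpow hΛ0]
    congr 1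
    push_cast; ring
  have bound1 : ‖(g a * (a:ℂ)^(r-1) * c⁻¹) * E Λ a‖ ≤ 1/2 * Λ ^ (-((r:ℝ)+1)/2) * S := by
    rw [norm_mul, norm_E, mul_one, norm_mul, norm_mul, hanorm, hnormc]
    have h1 : ‖g a‖ ≤ S := le_trans (by simpa using norm_le_sup hg hsupp (Nat.zero_le _) a) hM0S
    have h2 : Λ ^ (-((r:ℝ)-1)/2) * (2*Λ)⁻¹ = 1/2 * Λ ^ (-((r:ℝ)+1)/2) := by
      rw [mul_inv, mul_comm (2:ℝ)⁻¹ Λ⁻¹, hΛinv, ← mul_assoc, merge _ _ _ (by ring :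
        -((r:ℝ)-1)/2 + (-1) = -((r:ℝ)+1)/2)]
      ring
    calc ‖g a‖ * Λ ^ (-((r:ℝ)-1)/2) * (2*Λ)⁻¹
        = ‖g a‖ * (Λ ^ (-((r:ℝ)-1)/2) * (2*Λ)⁻¹) := by ring
      _ ≤ S * (Λ ^ (-((r:ℝ)-1)/2) * (2*Λ)⁻¹) := by
          apply mul_le_mul_of_nonneg_right h1
          positivity
      _ = 1/2 * Λ ^ (-((r:ℝ)+1)/2) * S := by rw [h2]; ring
  -- bound from h₁ (the deriv g term)
  have hI1 : ‖∫ y in a..R, deriv g y * (y:ℂ)^(r-1) * E Λ y‖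
      ≤ C₁ * Λ ^ (-(((r-1:ℤ):ℝ) + 1)/2) *
          ∑ j ∈ Finset.range (t+1), Λ ^ (-(j:ℝ)/2) * (⨆ y : ℝ, ‖iteratedDeriv j (deriv g) y‖) :=
    h₁ (deriv g) hgderiv hsupp' Λ hΛ R hR' haR
  have hshift : ∀ j : ℕ, (⨆ y : ℝ, ‖iteratedDeriv j (deriv g) y‖)
      = ⨆ y : ℝ, ‖iteratedDeriv (j+1) g y‖ := by
    intro j; congr 1; funext y; rw [iteratedDeriv_succ']
  have hS1 : (∑ j ∈ Finset.range (t+1), Λ ^ (-(j:ℝ)/2) * (⨆ y : ℝ, ‖iteratedDeriv j (deriv g) y‖))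
      ≤ Λ ^ ((1:ℝ)/2) * S := by
    have expand : Λ ^ ((1:ℝ)/2) * S
        = ∑ j ∈ Finset.range (t+2), Λ ^ ((1:ℝ)/2) * (Λ ^ (-(j:ℝ)/2)
            * (⨆ y : ℝ, ‖iteratedDeriv j g y‖)) := by
      rw [hS_def, Finset.mul_sum]
    rw [expand, Finset.sum_range_succ'
      (f := fun j : ℕ => Λ ^ ((1:ℝ)/2) * (Λ ^ (-(j:ℝ)/2) * ⨆ y : ℝ, ‖iteratedDeriv j g y‖))]
    have eterm : ∀ j : ℕ, Λ ^ ((1:ℝ)/2) * (Λ ^ (-((j+1:ℕ):ℝ)/2)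
          * ⨆ y : ℝ, ‖iteratedDeriv (j+1) g y‖)
        = Λ ^ (-(j:ℝ)/2) * ⨆ y : ℝ, ‖iteratedDeriv (j+1) g y‖ := by
      intro j
      rw [← mul_assoc, merge _ _ _ (by push_cast; ring : (1:ℝ)/2 + (-((j+1:ℕ):ℝ)/2) = -(j:ℝ)/2)]
    calc (∑ j ∈ Finset.range (t+1), Λ ^ (-(j:ℝ)/2) * (⨆ y : ℝ, ‖iteratedDeriv j (deriv g) y‖))
        = ∑ j ∈ Finset.range (t+1), Λ ^ ((1:ℝ)/2) * (Λ ^ (-((j+1:ℕ):ℝ)/2)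
            * ⨆ y : ℝ, ‖iteratedDeriv (j+1) g y‖) := by
          apply Finset.sum_congr rfl
          intro j hj
          rw [hshift j, eterm j]
      _ ≤ (∑ j ∈ Finset.range (t+1), Λ ^ ((1:ℝ)/2) * (Λ ^ (-((j+1:ℕ):ℝ)/2)
            * ⨆ y : ℝ, ‖iteratedDeriv (j+1) g y‖))
          + Λ ^ ((1:ℝ)/2) * (Λ ^ (-((0:ℕ):ℝ)/2) * ⨆ y : ℝ, ‖iteratedDeriv 0 g y‖) := by
          apply le_add_of_nonneg_right
          apply mul_nonneg (Real.rpow_nonneg hΛ0.le _)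
          exact mul_nonneg (Real.rpow_nonneg hΛ0.le _) (sup_nonneg' hg hsupp (Nat.zero_le _))
  -- term 2
  have e21 : -(((r-1:ℤ):ℝ) + 1)/2 = -(r:ℝ)/2 := by push_cast; ring
  have bound2 : ‖c⁻¹ * (∫ y in a..R, deriv g y * (y:ℂ)^(r-1) * E Λ y)‖
      ≤ C₁/2 * Λ ^ (-((r:ℝ)+1)/2) * S := by
    rw [norm_mul, hnormc]
    have step : ‖∫ y in a..R, deriv g y * (y:ℂ)^(r-1) * E Λ y‖
        ≤ C₁ * Λ ^ (-(r:ℝ)/2) * (Λ ^ ((1:ℝ)/2) * S) := by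
      refine le_trans (e21 ▸ hI1) ?_
      exact mul_le_mul_of_nonneg_left hS1 (mul_nonneg hC₁ (Real.rpow_nonneg hΛ0.le _))
    calc (2*Λ)⁻¹ * ‖∫ y in a..R, deriv g y * (y:ℂ)^(r-1) * E Λ y‖
        ≤ (2*Λ)⁻¹ * (C₁ * Λ ^ (-(r:ℝ)/2) * (Λ ^ ((1:ℝ)/2) * S)) := by
          apply mul_le_mul_of_nonneg_left step
          positivity
      _ = C₁/2 * (Λ⁻¹ * (Λ ^ (-(r:ℝ)/2) * Λ ^ ((1:ℝ)/2))) * S := by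
          rw [mul_inv]; ring
      _ = C₁/2 * Λ ^ (-((r:ℝ)+1)/2) * S := by
          rw [hΛinv, merge _ _ _ (by ring : -(r:ℝ)/2 + (1:ℝ)/2 = (1-(r:ℝ))/2), 
            merge _ _ _ (by ring : (-1:ℝ) + (1-(r:ℝ))/2 = -((r:ℝ)+1)/2)]
  -- term 3
  have hI2 : ‖∫ y in a..R, g y * (y:ℂ)^(r-2) * E Λ y‖
      ≤ C₂ * Λ ^ (-(((r-2:ℤ):ℝ) + 1)/2) * S := h₂ g hg hsupp Λ hΛ R hR haR
  have e31 : -(((r-2:ℤ):ℝ) + 1)/2 = -((r:ℝ)-1)/2 := by push_cast; ring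
  have hnormr : ‖((r-1:ℤ):ℂ)‖ = |(r:ℝ)-1| := by
    rw [show ((r-1:ℤ):ℂ) = (((r:ℝ)-1 : ℝ):ℂ) by push_cast; ring, Complex.norm_real,
      Real.norm_eq_abs]
  have bound3 : ‖(((r-1:ℤ):ℂ) * c⁻¹) * (∫ y in a..R, g y * (y:ℂ)^(r-2) * E Λ y)‖
      ≤ |(r:ℝ)-1| * C₂ / 2 * Λ ^ (-((r:ℝ)+1)/2) * S := by
    rw [norm_mul, norm_mul, hnormc, hnormr]
    calc |(r:ℝ)-1| * (2*Λ)⁻¹ * ‖∫ y in a..R, g y * (y:ℂ)^(r-2) * E Λ y‖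
        ≤ |(r:ℝ)-1| * (2*Λ)⁻¹ * (C₂ * Λ ^ (-((r:ℝ)-1)/2) * S) := by
          apply mul_le_mul_of_nonneg_left (e31 ▸ hI2)
          positivity
      _ = |(r:ℝ)-1| * C₂ / 2 * (Λ⁻¹ * Λ ^ (-((r:ℝ)-1)/2)) * S := by
          rw [mul_inv]; ring
      _ = |(r:ℝ)-1| * C₂ / 2 * Λ ^ (-((r:ℝ)+1)/2) * S := by
          rw [hΛinv, merge _ _ _ (by ring : (-1:ℝ) + (-((r:ℝ)-1)/2) = -((r:ℝ)+1)/2)]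
  -- assemble
  rw [key, split]
  calc ‖- ((g a * (a:ℂ)^(r-1) * c⁻¹) * E Λ a)
        - (c⁻¹ * (∫ y in a..R, deriv g y * (y:ℂ)^(r-1) * E Λ y)
          + (((r-1:ℤ):ℂ) * c⁻¹) * (∫ y in a..R, g y * (y:ℂ)^(r-2) * E Λ y))‖
      ≤ ‖(g a * (a:ℂ)^(r-1) * c⁻¹) * E Λ a‖
        + (‖c⁻¹ * (∫ y in a..R, deriv g y * (y:ℂ)^(r-1) * E Λ y)‖
          + ‖(((r-1:ℤ):ℂ) * c⁻¹) * (∫ y in a..R, g y * (y:ℂ)^(r-2) * E Λ y)‖) := by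
        refine le_trans (norm_sub_le _ _) ?_
        rw [norm_neg]
        exact add_le_add le_rfl (norm_add_le _ _)
    _ ≤ (1/2 * Λ ^ (-((r:ℝ)+1)/2) * S) + ((C₁/2 * Λ ^ (-((r:ℝ)+1)/2) * S)
          + (|(r:ℝ)-1| * C₂ / 2 * Λ ^ (-((r:ℝ)+1)/2) * S)) :=
        add_le_add bound1 (add_le_add bound2 bound3)
    _ = (1/2 + C₁/2 + |(r:ℝ)-1| * C₂ / 2) * Λ ^ (-((r:ℝ) + 1)/2) * S := by ring



lemma aux (n : ℕ) : ∀ r : ℤ, ∀ s : ℕ, r + 2 ≤ (s : ℤ) → r + 2 ≤ (n : ℤ) →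
    ∃ C : ℝ, 0 ≤ C ∧ ∀ g : ℝ → ℂ, ContDiff ℝ (s:ℕ) g → HasCompactSupport g →
      ∀ Λ : ℝ, 1 ≤ Λ → ∀ R : ℝ, (∀ y, R ≤ y → y ∉ tsupport g) → Λ ^ (-(1:ℝ)/2) ≤ R →
      ‖∫ y in (Λ ^ (-(1:ℝ)/2))..R, g y * (y:ℂ) ^ r * E Λ y‖
        ≤ C * Λ ^ (-((r:ℝ) + 1)/2) *
            ∑ j ∈ Finset.range (s+1), Λ ^ (-(j:ℝ)/2) * (⨆ y : ℝ, ‖iteratedDeriv j g y‖) := by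
  induction n using Nat.strong_induction_on with
  | _ n ih =>
  intro r s hrs hrn
  by_cases hr2 : r ≤ -2
  · exact ⟨1, by norm_num, fun g hg hsupp Λ hΛ R _ haR =>
      auxA r s hr2 g hg hsupp Λ hΛ R haR⟩
  · push_neg at hr2
    have hrm1 : -1 ≤ r := by omega
    obtain ⟨t, rfl⟩ : ∃ t, s = t + 1 := ⟨s - 1, by omega⟩
    have hn1 : 1 ≤ n := by omega
    obtain ⟨C₁, hC₁nn, h₁⟩ := ih (n-1) (by omega) (r-1) t (by omega) (by omega)
    obtain ⟨C₂, hC₂nn, h₂⟩ := ih (n-1) (by omega) (r-2) (t+1) (by omega) (by omega)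
    refine ⟨1/2 + C₁/2 + |(r:ℝ)-1| * C₂ / 2, ?_, ?_⟩
    · have := abs_nonneg ((r:ℝ)-1)
      have h3 : 0 ≤ |(r:ℝ)-1| * C₂ / 2 := by
        apply div_nonneg (mul_nonneg this hC₂nn); norm_num
      linarith
    · exact auxB r t hrm1 (by omega) C₁ C₂ hC₁nn hC₂nn
        (fun g hg hsupp Λ hΛ R hR haR => h₁ g hg hsupp Λ hΛ R hR haR)
        (fun g hg hsupp Λ hΛ R hR haR => h₂ g hg hsupp Λ hΛ R hR haR)

lemma iteratedDeriv_F {g : ℝ → ℂ} (hg : Continuous g) (hsupp : HasCompactSupport g) (m : ℕ) :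
    iteratedDeriv m (fun Λ' : ℝ => ∫ y : ℝ, g y * E Λ' y)
    = fun Λ' : ℝ => ∫ y : ℝ, g y * (Complex.I * (y:ℂ)^2)^m * E Λ' y := by
  have cont1 : ∀ (k : ℕ) (x : ℝ), Continuous (fun y : ℝ => g y * (Complex.I * (y:ℂ)^2)^k * E x y) := by
    intro k x
    exact (hg.mul ((continuous_const.mul (Complex.continuous_ofReal.pow 2)).pow k)).mul
      (continuous_E x)
  have supp1 : ∀ (k : ℕ) (x : ℝ), HasCompactSupport (fun y : ℝ => g y * (Complex.I * (y:ℂ)^2)^k * E x y) :=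
    fun k x => (hsupp.mul_right).mul_right
  induction m with
  | zero => funext Λ'; simp
  | succ k ih =>
    rw [iteratedDeriv_succ, ih]
    funext Λ₀
    have main : HasDerivAt (fun Λ' : ℝ => ∫ y : ℝ, g y * (Complex.I * (y:ℂ)^2)^k * E Λ' y)
        (∫ y : ℝ, g y * (Complex.I * (y:ℂ)^2)^(k+1) * E Λ₀ y) Λ₀ := by
      have h := hasDerivAt_integral_of_dominated_loc_of_deriv_le (μ := volume) (x₀ := Λ₀)
        (s := Metric.ball Λ₀ 1)
        (F := fun (Λ' : ℝ) (y : ℝ) => g y * (Complex.I * (y:ℂ)^2)^k * E Λ' y)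
        (F' := fun (Λ' : ℝ) (y : ℝ) => g y * (Complex.I * (y:ℂ)^2)^(k+1) * E Λ' y)
        (bound := fun y : ℝ => ‖g y‖ * |y|^(2*(k+1)))
        (Metric.ball_mem_nhds Λ₀ one_pos)
        (Filter.Eventually.of_forall (fun x => (cont1 k x).aestronglyMeasurable))
        ((cont1 k Λ₀).integrable_of_hasCompactSupport (supp1 k Λ₀))
        ((cont1 (k+1) Λ₀).aestronglyMeasurable)
        (Filter.Eventually.of_forall (fun y => ?_))
        (((hg.norm.mul (continuous_abs.pow (2*(k+1)))).integrable_of_hasCompactSupport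
          (hsupp.norm.mul_right)))
        (Filter.Eventually.of_forall (fun y => ?_))
      · exact h.2
      · -- the bound
        intro x _
        simp only [norm_mul, norm_E, mul_one, norm_pow, Complex.norm_I, one_mul,
          Complex.norm_real, Real.norm_eq_abs, ← pow_mul]
        exact le_rfl
      · -- the derivative
        intro x _
        have h1 : HasDerivAt (fun x' : ℝ => Complex.I * (x':ℂ) * (y:ℂ)^2)
            (Complex.I * 1 * (y:ℂ)^2) x :=
          ((hasDerivAt_ofReal x).const_mul Complex.I).mul_const ((y:ℂ)^2)
        have h2 := (h1.cexp).const_mul (g y * (Complex.I * (y:ℂ)^2)^k)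
        convert h2 using 1
        · rfl
        · rfl
        simp only [E]
        ring
    exact main.deriv


end OscAux
end

open OscAux in
/-- Bounds on the `Λ`-derivatives of the oscillatory integral
`Λ ↦ ∫ g(y) e^{iΛy²} dy` for compactly supported `g ∈ C^K`. -/
theorem oscillatory_integral_lambda_deriv_bound (K m : ℕ)
    (hm : (m : ℝ) < ((K : ℝ) - 1) / 2) :
    ∃ C : ℝ, ∀ g : ℝ → ℂ, ContDiff ℝ K g → HasCompactSupport g →
      ∀ Λ : ℝ, 1 ≤ Λ →
      ‖iteratedDeriv m
          (fun Λ' : ℝ => ∫ y : ℝ, g y * Complex.exp (Complex.I * (Λ' : ℂ) * (y : ℂ) ^ 2)) Λ‖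
        ≤ C * Λ ^ (-(m : ℝ) - 1/2) *
            ∑ j ∈ Finset.range (K + 1), Λ ^ (-(j : ℝ) / 2) * (⨆ y : ℝ, ‖iteratedDeriv j g y‖) := by
  have hK : 2*m + 2 ≤ K := by
    have h1 : 2*(m:ℝ) + 1 < (K:ℝ) := by linarith
    have h2 : (2*m + 1 : ℕ) < K := by exact_mod_cast h1
    omega
  obtain ⟨CK, hCKnn, hCK⟩ := aux (2*m+2) ((2*m : ℕ) : ℤ) K (by exact_mod_cast hK) (by omega)
  refine ⟨2*CK + 2, ?_⟩
  intro g hg hsupp Λ hΛ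
  have hΛ0 : (0:ℝ) < Λ := lt_of_lt_of_le one_pos hΛ
  set a := Λ ^ (-(1:ℝ)/2) with ha_def
  have ha0 : 0 < a := Real.rpow_pos_of_pos hΛ0 _
  have ha1 : a ≤ 1 := Real.rpow_le_one_of_one_le_of_nonpos hΛ (by norm_num)
  -- rewrite the iterated derivative
  rw [show (fun Λ' : ℝ => ∫ y : ℝ, g y * Complex.exp (Complex.I * (Λ' : ℂ) * (y : ℂ) ^ 2))
      = fun Λ' : ℝ => ∫ y : ℝ, g y * E Λ' y from rfl,
    iteratedDeriv_F hg.continuous hsupp m]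
  -- pull out I^m
  have epull : (fun y : ℝ => g y * (Complex.I * (y:ℂ)^2)^m * E Λ y)
      = fun y : ℝ => Complex.I^m * (g y * (y:ℂ)^(2*m) * E Λ y) := by
    funext y
    rw [mul_pow, ← pow_mul]
    ring
  show ‖∫ y : ℝ, g y * (Complex.I * (y:ℂ)^2)^m * E Λ y‖ ≤ _
  rw [epull, integral_const_mul, norm_mul, norm_pow, Complex.norm_I, one_pow, one_mul]
  -- choose R
  obtain ⟨R0, hR0⟩ := (Metric.isBounded_iff_subset_closedBall (0:ℝ)).mp hsupp.isBounded
  set R := max 1 (R0 + 1) with hR_def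
  have h1R : (1:ℝ) ≤ R := le_max_left _ _
  have haR : a ≤ R := le_trans ha1 h1R
  have hRy : ∀ y : ℝ, R ≤ |y| → y ∉ tsupport g := by
    intro y hy hmem
    have := hR0 hmem
    rw [Metric.mem_closedBall, Real.dist_eq, sub_zero] at this
    have : R ≤ R0 := le_trans hy this
    have : R0 + 1 ≤ R0 := le_trans (le_max_right 1 (R0+1)) this
    linarith
  set h : ℝ → ℂ := fun y => g y * (y:ℂ)^(2*m) * E Λ y with hh_def
  have conth : Continuous h :=
    (hg.continuous.mul (Complex.continuous_ofReal.pow (2*m))).mul (continuous_E Λ)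
  have hzero : ∀ y : ℝ, y ∉ tsupport g → h y = 0 := by
    intro y hy
    rw [hh_def]
    simp [image_eq_zero_of_notMem_tsupport hy]
  -- reduce to interval integral
  have ered : (∫ y : ℝ, h y) = ∫ y in (-R)..R, h y := by
    rw [intervalIntegral.integral_of_le (by linarith : -R ≤ R)]
    refine (setIntegral_eq_integral_of_forall_compl_eq_zero ?_).symm
    intro y hy
    apply hzero
    apply hRy
    simp only [Set.mem_Ioc, not_and_or, not_lt, not_le] at hy
    rcases hy with h' | h'
    · rw [abs_of_nonpos (by linarith)]; linarith
    · rw [abs_of_pos (by linarith)]; linarith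
  have hint : ∀ x y : ℝ, IntervalIntegrable h volume x y := fun x y =>
    conth.intervalIntegrable x y
  have e1 : (∫ y in (-R)..(-a), h y) + (∫ y in (-a)..R, h y) = ∫ y in (-R)..R, h y :=
    intervalIntegral.integral_add_adjacent_intervals (hint _ _) (hint _ _)
  have e2 : (∫ y in (-a)..a, h y) + (∫ y in a..R, h y) = ∫ y in (-a)..R, h y :=
    intervalIntegral.integral_add_adjacent_intervals (hint _ _) (hint _ _)
  -- sums
  set S := ∑ j ∈ Finset.range (K+1), Λ ^ (-(j:ℝ)/2) * (⨆ y : ℝ, ‖iteratedDeriv j g y‖) with hS_def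
  have hterm_nonneg : ∀ j ∈ Finset.range (K+1),
      0 ≤ Λ ^ (-(j:ℝ)/2) * (⨆ y : ℝ, ‖iteratedDeriv j g y‖) := fun j hj =>
    mul_nonneg (Real.rpow_nonneg hΛ0.le _)
      (sup_nonneg' hg hsupp (Nat.lt_succ_iff.mp (Finset.mem_range.mp hj)))
  have hSnn : 0 ≤ S := Finset.sum_nonneg hterm_nonneg
  have hM0S : (⨆ y : ℝ, ‖iteratedDeriv 0 g y‖) ≤ S := by
    have h0 : (⨆ y : ℝ, ‖iteratedDeriv 0 g y‖)
        = Λ ^ (-((0:ℕ):ℝ)/2) * ⨆ y : ℝ, ‖iteratedDeriv 0 g y‖ := by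
      rw [show -((0:ℕ):ℝ)/2 = 0 by norm_num, Real.rpow_zero, one_mul]
    rw [h0, hS_def]
    exact Finset.single_le_sum
      (f := fun j : ℕ => Λ ^ (-(j:ℝ)/2) * ⨆ y : ℝ, ‖iteratedDeriv j g y‖)
      hterm_nonneg (Finset.mem_range.mpr (Nat.succ_pos _))
  set X := Λ ^ (-(2*(m:ℝ)+1)/2) with hX_def
  have hXnn : 0 ≤ X := Real.rpow_nonneg hΛ0.le _
  -- middle bound
  have hax : a ^ (2*m) * a = X := by
    rw [← pow_succ, ← zpow_natCast a, ha_def, a_zpow hΛ0, hX_def]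
    congr 1
    push_cast
    ring
  have mid : ‖∫ y in (-a)..a, h y‖ ≤ 2 * X * S := by
    have hptm : ∀ y ∈ Set.uIoc (-a) a, ‖h y‖ ≤ (⨆ y : ℝ, ‖iteratedDeriv 0 g y‖) * a^(2*m) := by
      intro y hy
      rw [Set.uIoc_of_le (by linarith : -a ≤ a)] at hy
      have hyabs : |y| ≤ a := abs_le.mpr ⟨hy.1.le, hy.2⟩
      rw [hh_def]
      simp only [norm_mul, norm_E, mul_one, norm_pow, Complex.norm_real, Real.norm_eq_abs]
      apply mul_le_mul
      · simpa using norm_le_sup hg hsupp (Nat.zero_le _) y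
      · exact pow_le_pow_left₀ (abs_nonneg y) hyabs _
      · positivity
      · exact sup_nonneg' hg hsupp (Nat.zero_le _)
    have := intervalIntegral.norm_integral_le_of_norm_le_const hptm
    have habs : |a - -a| = 2*a := by rw [abs_of_pos (by linarith)]; ring
    rw [habs] at this
    calc ‖∫ y in (-a)..a, h y‖ ≤ (⨆ y : ℝ, ‖iteratedDeriv 0 g y‖) * a^(2*m) * (2*a) := this
      _ = 2 * (a^(2*m) * a) * (⨆ y : ℝ, ‖iteratedDeriv 0 g y‖) := by ring
      _ ≤ 2 * (a^(2*m) * a) * S := by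
          apply mul_le_mul_of_nonneg_left hM0S
          positivity
      _ = 2 * X * S := by rw [hax]
  -- right bound
  have hexp : -((((2*m : ℕ) : ℤ):ℝ) + 1)/2 = -(2*(m:ℝ)+1)/2 := by push_cast; ring
  have right : ‖∫ y in a..R, h y‖ ≤ CK * X * S := by
    have := hCK g hg hsupp Λ hΛ R (fun y hy => hRy y (by rwa [abs_of_pos (by linarith)])) haR
    rw [hexp] at this
    have eint : (∫ y in a..R, g y * (y:ℂ) ^ (((2*m : ℕ)) : ℤ) * E Λ y) = ∫ y in a..R, h y := by
      apply intervalIntegral.integral_congr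
      intro x _
      show g x * (x:ℂ) ^ (((2*m:ℕ)):ℤ) * E Λ x = g x * (x:ℂ)^(2*m) * E Λ x
      rw [zpow_natCast]
    rwa [eint] at this
  -- left bound via reflection
  set g₁ : ℝ → ℂ := fun y => g (-y) with hg1_def
  have hg₁ : ContDiff ℝ (K:ℕ) g₁ := hg.comp (contDiff_id.neg)
  have hsupp₁ : HasCompactSupport g₁ := hsupp.comp_homeomorph (Homeomorph.neg ℝ)
  have hmem₁ : ∀ y : ℝ, y ∈ tsupport g₁ → -y ∈ tsupport g := by
    intro y hy
    have hsup : tsupport g₁ = (Homeomorph.neg ℝ) ⁻¹' (tsupport g) := by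
      have e0 : Function.support g₁ = (Homeomorph.neg ℝ) ⁻¹' (Function.support g) := rfl
      rw [tsupport, tsupport, e0, Homeomorph.preimage_closure]
    rw [hsup] at hy
    exact hy
  have hR₁ : ∀ y, R ≤ y → y ∉ tsupport g₁ := by
    intro y hy hmem
    exact hRy (-y) (by rw [abs_neg, abs_of_pos (by linarith)]; exact hy) (hmem₁ y hmem)
  have hsup₁ : ∀ j : ℕ, (⨆ y : ℝ, ‖iteratedDeriv j g₁ y‖) = ⨆ y : ℝ, ‖iteratedDeriv j g y‖ := by
    intro j
    have e : (fun y : ℝ => ‖iteratedDeriv j g₁ y‖)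
        = fun y : ℝ => ‖iteratedDeriv j g (-y)‖ := by
      funext y
      rw [hg1_def, iteratedDeriv_comp_neg, norm_smul]
      simp
    calc (⨆ y : ℝ, ‖iteratedDeriv j g₁ y‖) = ⨆ y : ℝ, ‖iteratedDeriv j g (-y)‖ := by rw [e]
      _ = ⨆ y : ℝ, ‖iteratedDeriv j g y‖ :=
          (Equiv.neg ℝ).surjective.iSup_comp (g := fun y => ‖iteratedDeriv j g y‖)
  have eleft : (∫ y in (-R)..(-a), h y) = ∫ x in a..R, g₁ x * (x:ℂ)^(((2*m:ℕ)):ℤ) * E Λ x := by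
    rw [← intervalIntegral.integral_comp_neg h]
    apply intervalIntegral.integral_congr
    intro x _
    show h (-x) = g₁ x * (x:ℂ)^(((2*m:ℕ)):ℤ) * E Λ x
    rw [zpow_natCast]
    show g (-x) * ((-x:ℝ):ℂ)^(2*m) * E Λ (-x) = g (-x) * (x:ℂ)^(2*m) * E Λ x
    have h1 : ((-x:ℝ):ℂ) = -(x:ℂ) := by push_cast; ring
    rw [h1, Even.neg_pow (even_two_mul m)]
    congr 1
    show Complex.exp (Complex.I * Λ * ((-x:ℝ):ℂ)^2) = Complex.exp (Complex.I * Λ * (x:ℂ)^2)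
    rw [h1, neg_sq]
  have left : ‖∫ y in (-R)..(-a), h y‖ ≤ CK * X * S := by
    rw [eleft]
    have hb := hCK g₁ hg₁ hsupp₁ Λ hΛ R hR₁ haR
    rw [hexp] at hb
    calc ‖∫ x in a..R, g₁ x * (x:ℂ)^(((2*m:ℕ)):ℤ) * E Λ x‖
        ≤ CK * X * ∑ j ∈ Finset.range (K+1), Λ^(-(j:ℝ)/2) * (⨆ y : ℝ, ‖iteratedDeriv j g₁ y‖) := hb
      _ = CK * X * S := by
          rw [hS_def]
          congr 1
          apply Finset.sum_congr rfl
          intro j _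
          rw [hsup₁ j]
  have efin : (-(2*(m:ℝ)+1)/2) = -(m:ℝ) - 1/2 := by ring
  calc ‖∫ y : ℝ, h y‖
      = ‖(∫ y in (-R)..(-a), h y) + ((∫ y in (-a)..a, h y) + (∫ y in a..R, h y))‖ := by
        rw [ered, ← e1, ← e2]
    _ ≤ ‖∫ y in (-R)..(-a), h y‖ + (‖∫ y in (-a)..a, h y‖ + ‖∫ y in a..R, h y‖) :=
        le_trans (norm_add_le _ _) (add_le_add le_rfl (norm_add_le _ _))
    _ ≤ CK * X * S + (2 * X * S + CK * X * S) := add_le_add left (add_le_add mid right)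
    _ = (2*CK + 2) * X * S := by ring
    _ = (2*CK + 2) * Λ ^ (-(m:ℝ) - 1/2) * S := by rw [hX_def, efin]
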